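/- arXiv:1903.04286 — 2 statements merged into one kernel-verified Lean document; each statement's English description precedes it below -/
import Mathlib

section
/- The general position number of the Kneser graph K(6,3) equals 20. -/
namespace SimpleGraph

variable {V : Type*}

/-- `S` is a general position set of `G`: no vertex of `S` lies on a geodesic
(shortest path) between two other vertices of `S`. -/
def IsGPSet (G : SimpleGraph V) (S : Set V) : Prop :=
  ∀ ⦃u v w : V⦄, u ∈ S → v ∈ S → w ∈ S → u ≠ v → u ≠ w → v ≠ w →
    ∀ p : G.Walk u v, p.IsPath → p.length = G.dist u v → w ∉ p.support

/-- The general position number of `G`: the maximum cardinality of a general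
position set of `G`. -/
noncomputable def gpNumber (G : SimpleGraph V) : ℕ :=
  sSup {n | ∃ S : Set V, G.IsGPSet S ∧ n = S.ncard}

/-- `ρ(G)`: the maximum number of vertices in a union of pairwise independent
complete subgraphs of `G`, where complete subgraphs `Q`, `Q'` are independent
if `d_G(u,u') ≥ 2` for every `u ∈ Q` and `u' ∈ Q'`. -/
noncomputable def rho (G : SimpleGraph V) : ℕ :=
  sSup {n | ∃ 𝒬 : Finset (Finset V),
    (∀ Q ∈ 𝒬, G.IsClique (Q : Set V)) ∧
    (∀ Q ∈ 𝒬, ∀ Q' ∈ 𝒬, Q ≠ Q' → ∀ u ∈ Q, ∀ u' ∈ Q', 2 ≤ G.edist u u') ∧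
    n = (⋃ Q ∈ 𝒬, (Q : Set V)).ncard}

/-- A graph is complete multipartite iff non-adjacency is transitive. -/
def IsCompleteMultipartite' (G : SimpleGraph V) : Prop := Transitive (¬G.Adj · ·)

/-- `η(G)`: the maximum order of an induced complete multipartite subgraph of
the complement of `G`. -/
noncomputable def eta (G : SimpleGraph V) : ℕ :=
  sSup {n | ∃ B : Set V, (Gᶜ.induce B).IsCompleteMultipartite' ∧ n = B.ncard}

/-- An independent set of a graph. -/
def IsIndepSet' (G : SimpleGraph V) (S : Set V) : Prop :=
  S.Pairwise fun u v => ¬ G.Adj u v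

/-- The independence number `α(G)`. -/
noncomputable def indepNum' (G : SimpleGraph V) : ℕ :=
  sSup {n | ∃ S : Set V, G.IsIndepSet' S ∧ n = S.ncard}

end SimpleGraph

/-- The Kneser graph `K(n,k)`: vertices are the `k`-element subsets of an
`n`-element set, two vertices adjacent iff the corresponding sets are disjoint. -/
def kneserGraph (n k : ℕ) : SimpleGraph {s : Finset (Fin n) // s.card = k} where
  Adj a b := Disjoint a.1 b.1 ∧ a ≠ b
  symm := by
    refine ⟨?_⟩
    rintro a b ⟨h1, h2⟩
    exact ⟨h1.symm, h2.symm⟩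
  loopless := by
    refine ⟨?_⟩
    rintro a ⟨-, h⟩
    exact h rfl

section Aux

abbrev V63 := {s : Finset (Fin 6) // s.card = 3}

lemma kneser_nbr_unique {a b c : Finset (Fin 6)} (ha : a.card = 3) (hb : b.card = 3)
    (hc : c.card = 3) (hab : Disjoint a b) (hac : Disjoint a c) : b = c := by
  have key : ∀ d : Finset (Fin 6), d.card = 3 → Disjoint a d → d = aᶜ := by
    intro d hd had
    apply Finset.eq_of_subset_of_card_le
    · intro x hx
      simp only [Finset.mem_compl]
      exact fun hxa => Finset.disjoint_left.mp had hxa hx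
    · rw [Finset.card_compl, ha, hd]
      simp
  rw [key b hb hab, key c hc hac]

lemma kneser_nbr_unique' {a b c : V63} (hab : (kneserGraph 6 3).Adj a b)
    (hac : (kneserGraph 6 3).Adj a c) : b = c :=
  Subtype.ext (kneser_nbr_unique a.2 b.2 c.2 hab.1 hac.1)

lemma kneser_path_length_le_one {u v : V63} (p : (kneserGraph 6 3).Walk u v)
    (hp : p.IsPath) : p.length ≤ 1 := by
  match p with
  | SimpleGraph.Walk.nil => simp
  | SimpleGraph.Walk.cons h SimpleGraph.Walk.nil => simp
  | SimpleGraph.Walk.cons (v := x) h (SimpleGraph.Walk.cons (v := y) h' q) =>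
    exfalso
    have huy : u = y := kneser_nbr_unique' h.symm h'
    have hmem : u ∈ (SimpleGraph.Walk.cons h' q).support := by
      rw [SimpleGraph.Walk.support_cons]
      exact List.mem_cons_of_mem _ (huy ▸ q.start_mem_support)
    have := hp.support_nodup
    rw [SimpleGraph.Walk.support_cons, List.nodup_cons] at this
    exact this.1 hmem

lemma card_V63 : Fintype.card V63 = 20 := by decide

end Aux

/-- The general position number of the Kneser graph `K(6,3)` equals `20`. -/
theorem gpNumber_kneserGraph_six_three : (kneserGraph 6 3).gpNumber = 20 := by
  have hncard_univ : (Set.univ : Set V63).ncard = 20 := by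
    rw [Set.ncard_univ, Nat.card_eq_fintype_card, card_V63]
  have hgp : (kneserGraph 6 3).IsGPSet (Set.univ : Set V63) := by
    intro u v w _ _ _ huv huw hvw p hp hlen hwmem
    have hle := kneser_path_length_le_one p hp
    interval_cases h : p.length
    · exact huv (SimpleGraph.Walk.eq_of_length_eq_zero h)
    · match p, h with
      | SimpleGraph.Walk.cons h' q, hh =>
        have hq0 : q.length = 0 := by
          simpa using hh
        have hxv := SimpleGraph.Walk.eq_of_length_eq_zero hq0
        subst hxv
        have hqnil : q = SimpleGraph.Walk.nil := SimpleGraph.Walk.nil_iff_eq_nil.mp (SimpleGraph.Walk.length_eq_zero_iff.mp hq0)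
        subst hqnil
        simp only [SimpleGraph.Walk.support_cons, SimpleGraph.Walk.support_nil,
          List.mem_cons, List.mem_singleton, List.not_mem_nil] at hwmem
        rcases hwmem with h1 | h1 | h1
        · exact huw h1.symm
        · exact hvw h1.symm
        · exact h1
  have hbdd : ∀ n ∈ {n | ∃ S : Set V63, (kneserGraph 6 3).IsGPSet S ∧ n = S.ncard},
      n ≤ 20 := by
    rintro n ⟨S, _, rfl⟩
    calc S.ncard ≤ (Set.univ : Set V63).ncard :=
          Set.ncard_le_ncard (Set.subset_univ S) Set.finite_univ
      _ = 20 := hncard_univ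
  have hmem : 20 ∈ {n | ∃ S : Set V63, (kneserGraph 6 3).IsGPSet S ∧ n = S.ncard} :=
    ⟨Set.univ, hgp, hncard_univ.symm⟩
  exact le_antisymm (csSup_le ⟨20, hmem⟩ hbdd) (le_csSup ⟨20, hbdd⟩ hmem)
end

section
/- If n_1 ≥ 2 and n_2 ≥ 2 are integers, then η(K_{n_1} □ K_{n_2}) = n_1 + n_2 − 2, i.e., the maximum order of an induced complete multipartite subgraph of the complement of K_{n_1} □ K_{n_2} equals n_1 + n_2 − 2. -/
open SimpleGraph in
private lemma boxCompl_adj {n₁ n₂ : ℕ} (u v : Fin n₁ × Fin n₂) :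
    ((((⊤ : SimpleGraph (Fin n₁)) □ (⊤ : SimpleGraph (Fin n₂)))ᶜ).Adj u v) ↔
      u.1 ≠ v.1 ∧ u.2 ≠ v.2 := by
  simp only [compl_adj, boxProd_adj, top_adj, ne_eq, Prod.ext_iff, not_and, not_or]
  tauto

open SimpleGraph in
private lemma induce_nonadj {n₁ n₂ : ℕ} {B : Set (Fin n₁ × Fin n₂)} (a b : ↥B) :
    ¬((((⊤ : SimpleGraph (Fin n₁)) □ (⊤ : SimpleGraph (Fin n₂)))ᶜ.induce B).Adj a b) ↔
      (a : Fin n₁ × Fin n₂).1 = (b : Fin n₁ × Fin n₂).1 ∨ (a : Fin n₁ × Fin n₂).2 = (b : Fin n₁ × Fin n₂).2 := by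
  rw [SimpleGraph.induce, SimpleGraph.comap_adj, boxCompl_adj]
  tauto

open SimpleGraph in
private lemma eta_upper {n₁ n₂ : ℕ} (h₁ : 2 ≤ n₁) (h₂ : 2 ≤ n₂) (B : Set (Fin n₁ × Fin n₂))
    (hB : ((((⊤ : SimpleGraph (Fin n₁)) □ (⊤ : SimpleGraph (Fin n₂)))ᶜ).induce B).IsCompleteMultipartite') :
    B.ncard ≤ n₁ + n₂ - 2 := by
  classical
  have hR : ∀ u v w : Fin n₁ × Fin n₂, u ∈ B → v ∈ B → w ∈ B →
      (u.1 = v.1 ∨ u.2 = v.2) → (v.1 = w.1 ∨ v.2 = w.2) → (u.1 = w.1 ∨ u.2 = w.2) := by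
    intro u v w hu hv hw huv hvw
    have := hB (x := ⟨u, hu⟩) (y := ⟨v, hv⟩) (z := ⟨w, hw⟩)
      ((induce_nonadj _ _).mpr huv) ((induce_nonadj _ _).mpr hvw)
    exact (induce_nonadj (⟨u, hu⟩ : ↥B) ⟨w, hw⟩).mp this
  by_cases hrow : ∃ u ∈ B, ∃ v ∈ B, u ≠ v ∧ u.1 = v.1
  · by_cases hcol : ∃ u ∈ B, ∃ v ∈ B, u ≠ v ∧ u.2 = v.2
    · obtain ⟨u, hu, v, hv, huv, h1eq⟩ := hrow
      obtain ⟨u', hu', v', hv', huv', h2eq⟩ := hcol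
      set g : Fin n₁ × Fin n₂ → Fin n₁ ⊕ Fin n₂ :=
        fun p => if ∃ q ∈ B, q ≠ p ∧ q.1 = p.1 then Sum.inr p.2 else Sum.inl p.1 with hg
      have hinj : Set.InjOn g B := by
        intro p hp q hq hpq
        by_cases hp' : ∃ r ∈ B, r ≠ p ∧ r.1 = p.1 <;>
          by_cases hq' : ∃ r ∈ B, r ≠ q ∧ r.1 = q.1 <;>
          simp only [hg, hp', hq', if_true, if_false] at hpq
        · -- both inr : p.2 = q.2
          have h2 : p.2 = q.2 := Sum.inr.inj hpq
          by_contra hne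
          obtain ⟨p', hp'B, hp'ne, hp'1⟩ := hp'
          have hr := hR p' p q hp'B hp hq (Or.inl hp'1) (Or.inr h2)
          rcases hr with h | h
          · exact hne (Prod.ext (hp'1 ▸ h) h2)
          · have : p'.2 ≠ p.2 := fun hh => hp'ne (Prod.ext hp'1 hh)
            exact this (h.trans h2.symm)
        · cases hpq
        · cases hpq
        · -- both inl : p.1 = q.1
          have h1 : p.1 = q.1 := Sum.inl.inj hpq
          by_contra hne
          exact hp' ⟨q, hq, Ne.symm hne, h1.symm⟩
      have hx : ∀ p ∈ B, g p ≠ Sum.inl u.1 := by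
        intro p hp hgp
        by_cases hp' : ∃ r ∈ B, r ≠ p ∧ r.1 = p.1
        · simp only [hg, hp', if_true] at hgp
          cases hgp
        · simp only [hg, hp', if_false] at hgp
          have h1 : p.1 = u.1 := Sum.inl.inj hgp
          by_cases hpu : p = u
          · exact hp' ⟨v, hv, fun hh => huv (hpu ▸ hh.symm), by rw [hpu, h1eq]⟩
          · exact hp' ⟨u, hu, fun hh => hpu hh.symm, h1.symm⟩
      have hy : ∀ p ∈ B, g p ≠ Sum.inr u'.2 := by
        intro p hp hgp
        by_cases hp' : ∃ r ∈ B, r ≠ p ∧ r.1 = p.1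
        · simp only [hg, hp', if_true] at hgp
          have h2 : p.2 = u'.2 := Sum.inr.inj hgp
          obtain ⟨p', hp'B, hp'ne, hp'1⟩ := hp'
          have hp'2 : p'.2 ≠ p.2 := fun hh => hp'ne (Prod.ext hp'1 hh)
          have hr := hR p' p u' hp'B hp hu' (Or.inl hp'1) (Or.inr h2)
          rcases hr with h | h
          · -- p'.1 = u'.1, so p = u'
            have hpu' : p = u' := Prod.ext (hp'1 ▸ h) h2
            have hr2 := hR p' u' v' hp'B hu' hv' (Or.inl h) (Or.inr h2eq)
            rcases hr2 with h' | h'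
            · exact huv' (Prod.ext (h ▸ h') h2eq)
            · exact hp'2 (by rw [h', ← h2eq, ← hpu'])
          · exact hp'2 (h.trans h2.symm)
        · simp only [hg, hp', if_false] at hgp
          cases hgp
      have hxy : (Sum.inl u.1 : Fin n₁ ⊕ Fin n₂) ≠ Sum.inr u'.2 := by simp
      have himg : g '' B ⊆ Set.univ \ {Sum.inl u.1, Sum.inr u'.2} := by
        rintro _ ⟨p, hp, rfl⟩
        refine ⟨Set.mem_univ _, ?_⟩
        simp only [Set.mem_insert_iff, Set.mem_singleton_iff, not_or]
        exact ⟨hx p hp, hy p hp⟩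
      calc B.ncard = (g '' B).ncard := (Set.ncard_image_of_injOn hinj).symm
        _ ≤ (Set.univ \ {Sum.inl u.1, Sum.inr u'.2} : Set (Fin n₁ ⊕ Fin n₂)).ncard :=
            Set.ncard_le_ncard himg (Set.toFinite _)
        _ = n₁ + n₂ - 2 := by
            rw [Set.ncard_diff (Set.subset_univ _), Set.ncard_pair hxy, Set.ncard_univ]
            simp
    · push_neg at hcol
      have hinj : Set.InjOn Prod.snd B := by
        intro p hp q hq hpq
        by_contra hne
        exact (hcol p hp q hq hne) hpq
      calc B.ncard = (Prod.snd '' B).ncard := (Set.ncard_image_of_injOn hinj).symm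
        _ ≤ (Set.univ : Set (Fin n₂)).ncard := Set.ncard_le_ncard (Set.subset_univ _) Set.finite_univ
        _ ≤ n₁ + n₂ - 2 := by rw [Set.ncard_univ]; simp; omega
  · push_neg at hrow
    have hinj : Set.InjOn Prod.fst B := by
      intro p hp q hq hpq
      by_contra hne
      exact (hrow p hp q hq hne) hpq
    calc B.ncard = (Prod.fst '' B).ncard := (Set.ncard_image_of_injOn hinj).symm
      _ ≤ (Set.univ : Set (Fin n₁)).ncard := Set.ncard_le_ncard (Set.subset_univ _) Set.finite_univ
      _ ≤ n₁ + n₂ - 2 := by rw [Set.ncard_univ]; simp; omega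

/-- If `n₁, n₂ ≥ 2`, then `η(K_{n₁} □ K_{n₂}) = n₁ + n₂ - 2`: the maximum
order of an induced complete multipartite subgraph of the complement of
`K_{n₁} □ K_{n₂}` equals `n₁ + n₂ - 2`. -/
theorem eta_boxProd_complete (n₁ n₂ : ℕ) (h₁ : 2 ≤ n₁) (h₂ : 2 ≤ n₂) :
    ((⊤ : SimpleGraph (Fin n₁)) □ (⊤ : SimpleGraph (Fin n₂))).eta
      = n₁ + n₂ - 2 := by
  classical
  haveI : NeZero n₁ := ⟨by omega⟩
  haveI : NeZero n₂ := ⟨by omega⟩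
  rw [SimpleGraph.eta]
  have hub : ∀ n ∈ {n | ∃ B : Set (Fin n₁ × Fin n₂),
      ((((⊤ : SimpleGraph (Fin n₁)) □ (⊤ : SimpleGraph (Fin n₂)))ᶜ).induce B).IsCompleteMultipartite'
        ∧ n = B.ncard}, n ≤ n₁ + n₂ - 2 := by
    rintro n ⟨B, hB, rfl⟩
    exact eta_upper h₁ h₂ B hB
  set B₀ : Set (Fin n₁ × Fin n₂) :=
    {p | (p.1 = 0 ∧ p.2 ≠ 0) ∨ (p.1 ≠ 0 ∧ p.2 = 0)} with hB₀
  have hcm : ((((⊤ : SimpleGraph (Fin n₁)) □ (⊤ : SimpleGraph (Fin n₂)))ᶜ).induce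
      B₀).IsCompleteMultipartite' := by
    intro x y z hxy hyz
    rw [induce_nonadj] at hxy hyz ⊢
    have hx := x.2
    have hy := y.2
    have hz := z.2
    simp only [hB₀, Set.mem_setOf_eq] at hx hy hz
    rcases hx with ⟨hx1, hx2⟩ | ⟨hx1, hx2⟩ <;>
      rcases hy with ⟨hy1, hy2⟩ | ⟨hy1, hy2⟩ <;>
      rcases hz with ⟨hz1, hz2⟩ | ⟨hz1, hz2⟩ <;>
      rcases hxy with h | h <;> rcases hyz with h' | h' <;> simp_all
  have hcard : n₁ + n₂ - 2 = B₀.ncard := by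
    have hBF : B₀ = ↑((({0} : Finset (Fin n₁)) ×ˢ ({0} : Finset (Fin n₂))ᶜ) ∪
        ((({0} : Finset (Fin n₁))ᶜ) ×ˢ ({0} : Finset (Fin n₂)))) := by
      ext ⟨a, b⟩
      simp only [hB₀, Set.mem_setOf_eq, Finset.coe_union, Finset.coe_product, Set.mem_union,
        Set.mem_prod, Finset.coe_singleton, Set.mem_singleton_iff, Finset.coe_compl,
        Set.mem_compl_iff]
    have hdisj : Disjoint (({0} : Finset (Fin n₁)) ×ˢ ({0} : Finset (Fin n₂))ᶜ)
        (((({0} : Finset (Fin n₁))ᶜ) ×ˢ ({0} : Finset (Fin n₂)))) := by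
      rw [Finset.disjoint_left]
      rintro ⟨a, b⟩ hm1 hm2
      simp only [Finset.mem_product, Finset.mem_compl, Finset.mem_singleton] at hm1 hm2
      exact hm2.1 hm1.1
    rw [hBF, Set.ncard_coe_finset, Finset.card_union_of_disjoint hdisj]
    simp only [Finset.card_product, Finset.card_compl, Finset.card_singleton, Fintype.card_fin]
    omega
  have hmem : n₁ + n₂ - 2 ∈ {n | ∃ B : Set (Fin n₁ × Fin n₂),
      ((((⊤ : SimpleGraph (Fin n₁)) □ (⊤ : SimpleGraph (Fin n₂)))ᶜ).induce B).IsCompleteMultipartite'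
        ∧ n = B.ncard} := ⟨B₀, hcm, hcard⟩
  exact le_antisymm (csSup_le ⟨_, hmem⟩ hub) (le_csSup ⟨_, hub⟩ hmem)
end
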